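/- Let M₁, M₂ be rank-one positive semidefinite N×N real matrices with tr(Mᵢ) = 1, tr(Δ Mᵢ) = xᵢ, tr(L Mᵢ) = yᵢ for i = 1,2, where N ≥ 3. Then for every β ∈ [0,1] there exists a rank-one positive semidefinite matrix M with tr(M) = 1, tr(Δ M) = β x₁ + (1-β) x₂, and tr(L M) = β y₁ + (1-β) y₂. -/

import Mathlib

open Matrix BigOperators

/-- A simple (loopless, undirected) connected weighted graph on `N` vertices,
presented via its weight function. -/
structure GraphLaplacian (N : ℕ) where
  w : Fin N → Fin N → ℝ
  symm : ∀ i j, w i j = w j i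
  nonneg : ∀ i j, 0 ≤ w i j
  loopless : ∀ i, w i i = 0
  connected : ∀ i j : Fin N, Relation.ReflTransGen (fun a b => 0 < w a b) i j

/-- The graph Laplacian `L = D - A`. -/
def GraphLaplacian.L {N : ℕ} (G : GraphLaplacian N) : Matrix (Fin N) (Fin N) ℝ :=
  fun i j => if i = j then ∑ k, G.w i k else -G.w i j

private lemma ro_exists_cos_sin (u v : ℝ) (h : u ^ 2 + v ^ 2 = 1) :
    ∃ θ : ℝ, Real.cos θ = u ∧ Real.sin θ = v := by
  have hu1 : -1 ≤ u := by nlinarith [sq_nonneg v]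
  have hu2 : u ≤ 1 := by nlinarith [sq_nonneg v]
  have hcos : Real.cos (Real.arccos u) = u := Real.cos_arccos hu1 hu2
  have hsin : Real.sin (Real.arccos u) = Real.sqrt (1 - u ^ 2) := Real.sin_arccos u
  have h1u : 1 - u ^ 2 = v ^ 2 := by linarith
  rcases le_or_gt 0 v with hv | hv
  · exact ⟨Real.arccos u, hcos, by rw [hsin, h1u, Real.sqrt_sq hv]⟩
  · refine ⟨-Real.arccos u, by rw [Real.cos_neg]; exact hcos, ?_⟩
    rw [Real.sin_neg, hsin, h1u, Real.sqrt_sq_eq_abs, abs_of_neg hv, neg_neg]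

private lemma ro_core3_semidef (μ : Fin 3 → ℝ) (hμ : ∀ i, 0 ≤ μ i) (a b : Fin 3 → ℝ)
    (ha : ∑ i, a i ^ 2 = 1) (hb : ∑ i, b i ^ 2 = 1)
    (hra : ∑ i, μ i * a i ^ 2 = 0) (hrb : ∑ i, μ i * b i ^ 2 = 0)
    (f : (Fin 3 → ℝ) → ℝ) (hf : Continuous f) (hfe : ∀ x, f (-x) = f x)
    (c : ℝ) (hc : c ∈ Set.uIcc (f a) (f b)) :
    ∃ x : Fin 3 → ℝ, (∑ i, x i ^ 2) = 1 ∧ (∑ i, μ i * x i ^ 2) = 0 ∧ f x = c := by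
  have hza : ∀ i, μ i * a i ^ 2 = 0 := fun i =>
    (Finset.sum_eq_zero_iff_of_nonneg (fun i _ => mul_nonneg (hμ i) (sq_nonneg _))).mp hra i
      (Finset.mem_univ i)
  have hzb : ∀ i, μ i * b i ^ 2 = 0 := fun i =>
    (Finset.sum_eq_zero_iff_of_nonneg (fun i _ => mul_nonneg (hμ i) (sq_nonneg _))).mp hrb i
      (Finset.mem_univ i)
  by_cases hab : b = -a
  · have hfb : f b = f a := by rw [hab, hfe]
    rw [hfb, Set.uIcc_self] at hc
    exact ⟨a, ha, hra, (Set.mem_singleton_iff.mp hc).symm⟩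
  · have hnz : ∀ t : ℝ, 0 < ∑ i, ((1 - t) * a i + t * b i) ^ 2 := by
      intro t
      by_contra hcon
      push_neg at hcon
      have hs0 : ∑ i, ((1 - t) * a i + t * b i) ^ 2 = 0 :=
        le_antisymm hcon (Finset.sum_nonneg fun i _ => sq_nonneg _)
      have h0 : ∀ i, (1 - t) * a i + t * b i = 0 := by
        intro i
        have := (Finset.sum_eq_zero_iff_of_nonneg (fun i _ => sq_nonneg _)).mp hs0 i
          (Finset.mem_univ i)
        exact pow_eq_zero_iff two_ne_zero |>.mp this
      have l1 : ∑ i, ((1 - t) * a i) ^ 2 = (1 - t) ^ 2 := by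
        have : ∑ i, ((1 - t) * a i) ^ 2 = (1 - t) ^ 2 * ∑ i, a i ^ 2 := by
          rw [Finset.mul_sum]; exact Finset.sum_congr rfl fun i _ => by ring
        rw [this, ha, mul_one]
      have l2 : ∑ i, (t * b i) ^ 2 = t ^ 2 := by
        have : ∑ i, (t * b i) ^ 2 = t ^ 2 * ∑ i, b i ^ 2 := by
          rw [Finset.mul_sum]; exact Finset.sum_congr rfl fun i _ => by ring
        rw [this, hb, mul_one]
      have e1 : (1 - t) ^ 2 = t ^ 2 := by
        rw [← l1, ← l2]
        apply Finset.sum_congr rfl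
        intro i _
        have h := h0 i
        have : (1 - t) * a i = -(t * b i) := by linarith
        rw [this]; ring
      have ht : t = 1 / 2 := by nlinarith
      apply hab
      funext i
      have h := h0 i
      rw [ht] at h
      simp only [Pi.neg_apply]
      linarith
    set S : ℝ → ℝ := fun t => ∑ i, ((1 - t) * a i + t * b i) ^ 2 with hS
    have hScont : Continuous S := by
      apply continuous_finset_sum
      intro i _
      fun_prop
    have hsqrtpos : ∀ t, 0 < Real.sqrt (S t) := fun t => Real.sqrt_pos.mpr (hnz t)
    set γ : ℝ → (Fin 3 → ℝ) := fun t i => ((1 - t) * a i + t * b i) / Real.sqrt (S t) with hγ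
    have hγcont : Continuous γ := by
      apply continuous_pi; intro i
      apply Continuous.div
      · fun_prop
      · exact Real.continuous_sqrt.comp hScont
      · exact fun t => (hsqrtpos t).ne'
    have hγunit : ∀ t, ∑ i, (γ t i) ^ 2 = 1 := by
      intro t
      have h1 : ∑ i, (γ t i) ^ 2 = (∑ i, ((1 - t) * a i + t * b i) ^ 2) / (Real.sqrt (S t)) ^ 2 := by
        rw [Finset.sum_div]; exact Finset.sum_congr rfl fun i _ => by rw [div_pow]
      rw [h1, Real.sq_sqrt (hnz t).le]
      exact div_self (hnz t).ne'
    have hγr : ∀ t, ∑ i, μ i * (γ t i) ^ 2 = 0 := by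
      intro t
      apply Finset.sum_eq_zero; intro i _
      by_cases hμi : μ i = 0
      · rw [hμi]; ring
      · have hai : a i = 0 := by
          rcases mul_eq_zero.mp (hza i) with h | h
          · exact absurd h hμi
          · exact pow_eq_zero_iff two_ne_zero |>.mp h
        have hbi : b i = 0 := by
          rcases mul_eq_zero.mp (hzb i) with h | h
          · exact absurd h hμi
          · exact pow_eq_zero_iff two_ne_zero |>.mp h
        simp [hγ, hai, hbi]
    have hS0 : S 0 = 1 := by
      have h' : ∑ i, ((1 - (0 : ℝ)) * a i + 0 * b i) ^ 2 = ∑ i, a i ^ 2 :=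
        Finset.sum_congr rfl fun i _ => by ring
      calc S 0 = ∑ i, a i ^ 2 := h'
        _ = 1 := ha
    have hS1 : S 1 = 1 := by
      have h' : ∑ i, ((1 - (1 : ℝ)) * a i + 1 * b i) ^ 2 = ∑ i, b i ^ 2 :=
        Finset.sum_congr rfl fun i _ => by ring
      calc S 1 = ∑ i, b i ^ 2 := h'
        _ = 1 := hb
    have hγ0 : γ 0 = a := by
      funext i
      simp only [hγ, hS0, Real.sqrt_one]
      ring
    have hγ1 : γ 1 = b := by
      funext i
      simp only [hγ, hS1, Real.sqrt_one]
      ring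
    have hcont' : ContinuousOn (fun t => f (γ t)) (Set.uIcc 0 1) := (hf.comp hγcont).continuousOn
    have hc' : c ∈ Set.uIcc (f (γ 0)) (f (γ 1)) := by rw [hγ0, hγ1]; exact hc
    obtain ⟨t, _, htc⟩ := intermediate_value_uIcc hcont' hc'
    exact ⟨γ t, hγunit t, hγr t, htc⟩

private lemma ro_core3_indef (μ : Fin 3 → ℝ) (p : Fin 3) (hp : 0 < μ p)
    (hneg : ∀ q, q ≠ p → μ q ≤ 0) (a b : Fin 3 → ℝ)
    (ha : ∑ i, a i ^ 2 = 1) (hb : ∑ i, b i ^ 2 = 1)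
    (hra : ∑ i, μ i * a i ^ 2 = 0) (hrb : ∑ i, μ i * b i ^ 2 = 0)
    (f : (Fin 3 → ℝ) → ℝ) (hf : Continuous f) (hfe : ∀ x, f (-x) = f x)
    (c : ℝ) (hc : c ∈ Set.uIcc (f a) (f b)) :
    ∃ x : Fin 3 → ℝ, (∑ i, x i ^ 2) = 1 ∧ (∑ i, μ i * x i ^ 2) = 0 ∧ f x = c := by
  obtain ⟨q, s, hpq, hps, hqs, hcov⟩ :=
    (by decide :
      ∀ p : Fin 3, ∃ q s : Fin 3, p ≠ q ∧ p ≠ s ∧ q ≠ s ∧ ∀ i, i = p ∨ i = q ∨ i = s) p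
  have huniv : (Finset.univ : Finset (Fin 3)) = {p, q, s} := by
    ext x
    simp only [Finset.mem_univ, Finset.mem_insert, Finset.mem_singleton, true_iff]
    exact hcov x
  have hsum : ∀ F : Fin 3 → ℝ, ∑ i, F i = F p + F q + F s := by
    intro F
    rw [huniv, Finset.sum_insert (by simp [hpq, hps]), Finset.sum_insert (by simp [hqs]),
      Finset.sum_singleton, add_assoc]
  have hμq : μ q ≤ 0 := hneg q (Ne.symm hpq)
  have hμs : μ s ≤ 0 := hneg s (Ne.symm hps)
  set A := μ p with hA
  set g : ℝ → ℝ := fun θ => -(μ q * Real.cos θ ^ 2 + μ s * Real.sin θ ^ 2) with hgdef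
  have hg0 : ∀ θ, 0 ≤ g θ := by
    intro θ
    have h1 : μ q * Real.cos θ ^ 2 ≤ 0 := mul_nonpos_of_nonpos_of_nonneg hμq (sq_nonneg _)
    have h2 : μ s * Real.sin θ ^ 2 ≤ 0 := mul_nonpos_of_nonpos_of_nonneg hμs (sq_nonneg _)
    simp only [hgdef]; linarith
  have hAg : ∀ θ, 0 < A + g θ := fun θ => by have := hg0 θ; linarith
  set m : ℝ → ℝ := fun θ => Real.sqrt (A / (A + g θ)) with hmdef
  have hm2 : ∀ θ, m θ ^ 2 = A / (A + g θ) := fun θ =>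
    Real.sq_sqrt (div_nonneg hp.le (hAg θ).le)
  set γ : ℝ → ℝ → (Fin 3 → ℝ) := fun ε θ i =>
    if i = p then ε * Real.sqrt (g θ / (A + g θ))
    else if i = q then m θ * Real.cos θ
    else if i = s then m θ * Real.sin θ else 0 with hγdef
  have hγp : ∀ ε θ, γ ε θ p = ε * Real.sqrt (g θ / (A + g θ)) := by intros; simp [hγdef]
  have hγq : ∀ ε θ, γ ε θ q = m θ * Real.cos θ := by
    intros; simp [hγdef, Ne.symm hpq]
  have hγs : ∀ ε θ, γ ε θ s = m θ * Real.sin θ := by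
    intros; simp [hγdef, Ne.symm hps, Ne.symm hqs]
  have hsq2 : ∀ θ, (Real.sqrt (g θ / (A + g θ))) ^ 2 = g θ / (A + g θ) := fun θ =>
    Real.sq_sqrt (div_nonneg (hg0 θ) (hAg θ).le)
  have hunit : ∀ ε θ, ε ^ 2 = 1 → ∑ i, (γ ε θ i) ^ 2 = 1 := by
    intro ε θ hε
    rw [hsum, hγp, hγq, hγs]
    have h1 : (ε * Real.sqrt (g θ / (A + g θ))) ^ 2 = g θ / (A + g θ) := by
      rw [mul_pow, hε, one_mul, hsq2]
    have h2 := Real.sin_sq_add_cos_sq θ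
    have h3 := hm2 θ
    calc (ε * Real.sqrt (g θ / (A + g θ))) ^ 2 + (m θ * Real.cos θ) ^ 2 + (m θ * Real.sin θ) ^ 2
        = g θ / (A + g θ) + m θ ^ 2 * (Real.sin θ ^ 2 + Real.cos θ ^ 2) := by rw [h1]; ring
      _ = g θ / (A + g θ) + A / (A + g θ) * 1 := by rw [h3, h2]
      _ = 1 := by
          rw [mul_one, ← add_div, add_comm (g θ) A]
          exact div_self (hAg θ).ne'
  have hrz : ∀ ε θ, ε ^ 2 = 1 → ∑ i, μ i * (γ ε θ i) ^ 2 = 0 := by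
    intro ε θ hε
    rw [hsum, hγp, hγq, hγs]
    have h1 : (ε * Real.sqrt (g θ / (A + g θ))) ^ 2 = g θ / (A + g θ) := by
      rw [mul_pow, hε, one_mul, hsq2]
    have h3 := hm2 θ
    have hgθ : -(μ q * Real.cos θ ^ 2 + μ s * Real.sin θ ^ 2) = g θ := by rw [hgdef]
    calc μ p * (ε * Real.sqrt (g θ / (A + g θ))) ^ 2 + μ q * (m θ * Real.cos θ) ^ 2
          + μ s * (m θ * Real.sin θ) ^ 2
        = A * (g θ / (A + g θ)) + m θ ^ 2 * (μ q * Real.cos θ ^ 2 + μ s * Real.sin θ ^ 2) := by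
          rw [h1, hA]; ring
      _ = A * (g θ / (A + g θ)) - (A / (A + g θ)) * g θ := by
          rw [h3, ← hgθ]; ring
      _ = 0 := by ring
  have hgcont : Continuous g := by
    simp only [hgdef]; fun_prop
  have hmcont : Continuous m := by
    apply Real.continuous_sqrt.comp
    exact continuous_const.div (continuous_const.add hgcont) fun θ => (hAg θ).ne'
  have hγcont : ∀ ε, Continuous (γ ε) := by
    intro ε
    apply continuous_pi; intro i
    rcases hcov i with h | h | h
    · subst h
      simp only [hγp]
      apply continuous_const.mul
      apply Real.continuous_sqrt.comp
      exact hgcont.div (continuous_const.add hgcont) fun θ => (hAg θ).ne'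
    · subst h
      simp only [hγq]
      exact hmcont.mul Real.continuous_cos
    · subst h
      simp only [hγs]
      exact hmcont.mul Real.continuous_sin
  have hrep : ∀ x : Fin 3 → ℝ, (∑ i, x i ^ 2 = 1) → (∑ i, μ i * x i ^ 2 = 0) →
      ∃ ε θ, ε ^ 2 = 1 ∧ γ ε θ = x := by
    intro x hx1 hx0
    rw [hsum] at hx1 hx0
    have hρ2 : 0 < x q ^ 2 + x s ^ 2 := by
      by_contra hcon
      push_neg at hcon
      have hq0 : x q = 0 := by nlinarith [sq_nonneg (x q), sq_nonneg (x s)]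
      have hs0 : x s = 0 := by nlinarith [sq_nonneg (x q), sq_nonneg (x s)]
      have hxp : x p = 0 := by
        have h : μ p * x p ^ 2 = 0 := by rw [hq0, hs0] at hx0; simpa using hx0
        rcases mul_eq_zero.mp h with h' | h'
        · exact absurd h' hp.ne'
        · exact pow_eq_zero_iff two_ne_zero |>.mp h'
      rw [hxp, hq0, hs0] at hx1
      norm_num at hx1
    set ρ := Real.sqrt (x q ^ 2 + x s ^ 2) with hρdef
    have hρpos : 0 < ρ := Real.sqrt_pos.mpr hρ2
    have hρsq : ρ ^ 2 = x q ^ 2 + x s ^ 2 := Real.sq_sqrt hρ2.le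
    obtain ⟨θ, hcosθ, hsinθ⟩ := ro_exists_cos_sin (x q / ρ) (x s / ρ)
      (by field_simp; linarith [hρsq])
    have hρ1 : x p ^ 2 + ρ ^ 2 = 1 := by rw [hρsq]; linarith
    have hnum : -(μ q * x q ^ 2 + μ s * x s ^ 2) = A * x p ^ 2 := by
      rw [hA]; linarith
    have hgθ : g θ = A * x p ^ 2 / ρ ^ 2 := by
      have e : g θ = -(μ q * (x q / ρ) ^ 2 + μ s * (x s / ρ) ^ 2) := by
        simp only [hgdef]; rw [hcosθ, hsinθ]
      rw [e, ← hnum]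
      field_simp
    have hAgθ : A + g θ = A / ρ ^ 2 := by
      rw [hgθ]
      field_simp
      linear_combination hρ1
    have hmθ : m θ = ρ := by
      simp only [hmdef]
      rw [hAgθ]
      have h : A / (A / ρ ^ 2) = ρ ^ 2 := by
        field_simp
      rw [h, Real.sqrt_sq hρpos.le]
    have hpcoord : Real.sqrt (g θ / (A + g θ)) = |x p| := by
      rw [hAgθ, hgθ]
      have h : A * x p ^ 2 / ρ ^ 2 / (A / ρ ^ 2) = x p ^ 2 := by
        field_simp
      rw [h, Real.sqrt_sq_eq_abs]
    refine ⟨if 0 ≤ x p then 1 else -1, θ, by split <;> norm_num, ?_⟩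
    funext i
    rcases hcov i with h | h | h
    · subst h
      rw [hγp, hpcoord]
      split
      · rw [one_mul, abs_of_nonneg ‹_›]
      · rw [neg_one_mul, abs_of_neg (lt_of_not_ge ‹_›), neg_neg]
    · subst h
      rw [hγq, hmθ, hcosθ]
      field_simp
    · subst h
      rw [hγs, hmθ, hsinθ]
      field_simp
  obtain ⟨ε₁, θ₁, hε₁, hγa⟩ := hrep a ha hra
  obtain ⟨ε₂, θ₂, hε₂, hγb⟩ := hrep b hb hrb
  have hεcases : ∀ ε : ℝ, ε ^ 2 = 1 → ε = 1 ∨ ε = -1 := by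
    intro ε hε
    have h : (ε - 1) * (ε + 1) = 0 := by linear_combination hε
    rcases mul_eq_zero.mp h with h' | h'
    · left; linarith
    · right; linarith
  have hflip : ∀ ε θ, γ ε (θ + Real.pi) = -(γ (-ε) θ) := by
    intro ε θ
    have hgπ : g (θ + Real.pi) = g θ := by
      simp only [hgdef, Real.cos_add_pi, Real.sin_add_pi]
      ring
    have hmπ : m (θ + Real.pi) = m θ := by simp only [hmdef, hgπ]
    funext i
    rcases hcov i with h | h | h
    · subst h
      rw [Pi.neg_apply, hγp, hγp, hgπ]
      ring
    · subst h
      rw [Pi.neg_apply, hγq, hγq, hmπ, Real.cos_add_pi]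
      ring
    · subst h
      rw [Pi.neg_apply, hγs, hγs, hmπ, Real.sin_add_pi]
      ring
  set θ₂' := if ε₁ = ε₂ then θ₂ else θ₂ + Real.pi with hθ₂'
  have hendb : f (γ ε₁ θ₂') = f b := by
    by_cases he : ε₁ = ε₂
    · simp only [hθ₂', if_pos he]
      rw [he, hγb]
    · simp only [hθ₂', if_neg he]
      have hne : -ε₁ = ε₂ := by
        rcases hεcases ε₁ hε₁ with h1 | h1 <;> rcases hεcases ε₂ hε₂ with h2 | h2
        · exact absurd (h1.trans h2.symm) he
        · rw [h1, h2]
        · rw [h1, h2]; norm_num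
        · exact absurd (h1.trans h2.symm) he
      rw [show γ ε₁ (θ₂ + Real.pi) = -(γ (-ε₁) θ₂) from hflip ε₁ θ₂, hne, hγb, hfe]
  have hcont : ContinuousOn (fun θ => f (γ ε₁ θ)) (Set.uIcc θ₁ θ₂') :=
    (hf.comp (hγcont ε₁)).continuousOn
  have hc' : c ∈ Set.uIcc (f (γ ε₁ θ₁)) (f (γ ε₁ θ₂')) := by rw [hγa, hendb]; exact hc
  obtain ⟨θt, _, hθt⟩ := intermediate_value_uIcc hcont hc'
  exact ⟨γ ε₁ θt, hunit ε₁ θt hε₁, hrz ε₁ θt hε₁, hθt⟩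

private lemma ro_core3 (μ : Fin 3 → ℝ) (a b : Fin 3 → ℝ)
    (ha : ∑ i, a i ^ 2 = 1) (hb : ∑ i, b i ^ 2 = 1)
    (hra : ∑ i, μ i * a i ^ 2 = 0) (hrb : ∑ i, μ i * b i ^ 2 = 0)
    (f : (Fin 3 → ℝ) → ℝ) (hf : Continuous f) (hfe : ∀ x, f (-x) = f x)
    (c : ℝ) (hc : c ∈ Set.uIcc (f a) (f b)) :
    ∃ x : Fin 3 → ℝ, (∑ i, x i ^ 2) = 1 ∧ (∑ i, μ i * x i ^ 2) = 0 ∧ f x = c := by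
  by_cases h1 : ∀ i, 0 ≤ μ i
  · exact ro_core3_semidef μ h1 a b ha hb hra hrb f hf hfe c hc
  by_cases h2 : ∀ i, μ i ≤ 0
  · have hra' : ∑ i, (-μ i) * a i ^ 2 = 0 := by
      have : ∑ i, (-μ i) * a i ^ 2 = -∑ i, μ i * a i ^ 2 := by
        rw [← Finset.sum_neg_distrib]; exact Finset.sum_congr rfl fun i _ => by ring
      rw [this, hra, neg_zero]
    have hrb' : ∑ i, (-μ i) * b i ^ 2 = 0 := by
      have : ∑ i, (-μ i) * b i ^ 2 = -∑ i, μ i * b i ^ 2 := by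
        rw [← Finset.sum_neg_distrib]; exact Finset.sum_congr rfl fun i _ => by ring
      rw [this, hrb, neg_zero]
    obtain ⟨x, hx1, hx2, hx3⟩ := ro_core3_semidef (fun i => -μ i)
      (fun i => neg_nonneg.mpr (h2 i)) a b ha hb hra' hrb' f hf hfe c hc
    refine ⟨x, hx1, ?_, hx3⟩
    have : ∑ i, (-μ i) * x i ^ 2 = -∑ i, μ i * x i ^ 2 := by
      rw [← Finset.sum_neg_distrib]; exact Finset.sum_congr rfl fun i _ => by ring
    rw [this] at hx2
    linarith
  · push_neg at h1 h2
    obtain ⟨i, hi⟩ := h1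
    obtain ⟨j, hj⟩ := h2
    obtain ⟨k, hki, hkj⟩ : ∃ k : Fin 3, k ≠ i ∧ k ≠ j := by
      have : ∀ i j : Fin 3, ∃ k, k ≠ i ∧ k ≠ j := by decide
      exact this i j
    have hij : i ≠ j := fun h => by rw [h] at hi; linarith
    have hfact : ∀ i j k t : Fin 3, i ≠ j → k ≠ i → k ≠ j → t ≠ j → t = i ∨ t = k := by decide
    have hfact2 : ∀ i j k t : Fin 3, i ≠ j → k ≠ i → k ≠ j → t ≠ i → t = j ∨ t = k := by decide
    rcases le_or_gt (μ k) 0 with hk | hk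
    · apply ro_core3_indef μ j hj ?_ a b ha hb hra hrb f hf hfe c hc
      intro t ht
      rcases hfact i j k t hij hki hkj ht with h | h
      · rw [h]; exact hi.le
      · rw [h]; exact hk
    · have hra' : ∑ i, (-μ i) * a i ^ 2 = 0 := by
        have : ∑ i, (-μ i) * a i ^ 2 = -∑ i, μ i * a i ^ 2 := by
          rw [← Finset.sum_neg_distrib]; exact Finset.sum_congr rfl fun i _ => by ring
        rw [this, hra, neg_zero]
      have hrb' : ∑ i, (-μ i) * b i ^ 2 = 0 := by
        have : ∑ i, (-μ i) * b i ^ 2 = -∑ i, μ i * b i ^ 2 := by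
          rw [← Finset.sum_neg_distrib]; exact Finset.sum_congr rfl fun i _ => by ring
        rw [this, hrb, neg_zero]
      have hneg' : ∀ t, t ≠ i → -μ t ≤ 0 := by
        intro t ht
        rcases hfact2 i j k t hij hki hkj ht with h | h
        · rw [h]; simp only [neg_nonpos]; exact hj.le
        · rw [h]; simp only [neg_nonpos]; exact hk.le
      obtain ⟨x, hx1, hx2, hx3⟩ := ro_core3_indef (fun t => -μ t) i (by simpa using hi) hneg'
        a b ha hb hra' hrb' f hf hfe c hc
      refine ⟨x, hx1, ?_, hx3⟩
      have hneg2 : ∑ i, (-μ i) * x i ^ 2 = -∑ i, μ i * x i ^ 2 := by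
        rw [← Finset.sum_neg_distrib]; exact Finset.sum_congr rfl fun i _ => by ring
      rw [hneg2] at hx2
      linarith

private lemma ro_coreN {n : ℕ} (hn : 3 ≤ n) (R : Matrix (Fin n) (Fin n) ℝ) (hRT : Rᵀ = R)
    (u v : Fin n → ℝ) (hu : ∑ i, u i ^ 2 = 1) (hv : ∑ i, v i ^ 2 = 1)
    (hru : u ⬝ᵥ (R *ᵥ u) = 0) (hrv : v ⬝ᵥ (R *ᵥ v) = 0)
    (f : (Fin n → ℝ) → ℝ) (hf : Continuous f) (hfe : ∀ x, f (-x) = f x)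
    (c : ℝ) (hc : c ∈ Set.uIcc (f u) (f v)) :
    ∃ x : Fin n → ℝ, (∑ i, x i ^ 2 = 1) ∧ x ⬝ᵥ (R *ᵥ x) = 0 ∧ f x = c := by
  by_cases htriv : v = u ∨ v = -u
  · have hfv : f v = f u := by
      rcases htriv with h | h
      · rw [h]
      · rw [h, hfe]
    rw [hfv, Set.uIcc_self] at hc
    exact ⟨u, hu, hru, (Set.mem_singleton_iff.mp hc).symm⟩
  push_neg at htriv
  obtain ⟨hvu, hvnu⟩ := htriv
  -- dot product helper
  have hdot : ∀ x : Fin n → ℝ, x ⬝ᵥ x = ∑ i, x i ^ 2 := by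
    intro x; simp [dotProduct, sq]
  -- Gram–Schmidt
  set cuv := ∑ i, u i * v i with hcuv
  set s2 := ∑ i, (v i - cuv * u i) ^ 2 with hs2
  have hs2exp : s2 = 1 - cuv ^ 2 := by
    have h1 : ∀ i, (v i - cuv * u i) ^ 2
        = v i ^ 2 - (2 * cuv) * (u i * v i) + cuv ^ 2 * u i ^ 2 := fun i => by ring
    rw [hs2, Finset.sum_congr rfl fun i _ => h1 i]
    rw [Finset.sum_add_distrib, Finset.sum_sub_distrib, ← Finset.mul_sum, ← Finset.mul_sum]
    rw [hu, hv, ← hcuv]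
    ring
  have hs2pos : 0 < s2 := by
    rcases lt_or_eq_of_le (Finset.sum_nonneg fun i (_ : i ∈ Finset.univ) =>
      sq_nonneg (v i - cuv * u i)) with h | h
    · exact h
    · exfalso
      have h0 : ∀ i, v i - cuv * u i = 0 := by
        intro i
        have := (Finset.sum_eq_zero_iff_of_nonneg (fun i _ => sq_nonneg _)).mp h.symm i
          (Finset.mem_univ i)
        exact pow_eq_zero_iff two_ne_zero |>.mp this
      have hc2 : cuv ^ 2 = 1 := by
        have hs20 : s2 = 0 := by rw [hs2, ← h]
        linarith [hs2exp]
      have hcc : cuv = 1 ∨ cuv = -1 := by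
        have hfac : (cuv - 1) * (cuv + 1) = 0 := by linear_combination hc2
        rcases mul_eq_zero.mp hfac with h' | h'
        · left; linarith
        · right; linarith
      rcases hcc with h' | h'
      · apply hvu; funext i; have := h0 i; rw [h'] at this; linarith
      · apply hvnu; funext i; have := h0 i; rw [h'] at this
        simp only [Pi.neg_apply]; linarith
  set sv := Real.sqrt s2 with hsv
  have hsvpos : 0 < sv := Real.sqrt_pos.mpr hs2pos
  have hsvsq : sv ^ 2 = s2 := Real.sq_sqrt hs2pos.le
  set v' : Fin n → ℝ := fun i => (v i - cuv * u i) / sv with hv'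
  have dv'v' : ∑ i, v' i * v' i = 1 := by
    have h1 : ∀ i, v' i * v' i = (v i - cuv * u i) ^ 2 / s2 := by
      intro i
      rw [hv']
      rw [div_mul_div_comm, ← sq, ← hsvsq]
      congr 1
      ring
    rw [Finset.sum_congr rfl fun i _ => h1 i, ← Finset.sum_div, ← hs2]
    exact div_self hs2pos.ne'
  have duv' : ∑ i, u i * v' i = 0 := by
    have h1 : ∀ i, u i * v' i = (u i * v i - cuv * (u i * u i)) / sv := by
      intro i; rw [hv']; ring
    rw [Finset.sum_congr rfl fun i _ => h1 i, ← Finset.sum_div]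
    rw [Finset.sum_sub_distrib, ← Finset.mul_sum]
    have huu : ∑ i, u i * u i = 1 := by rw [← hu]; exact Finset.sum_congr rfl fun i _ => by rw [sq]
    rw [huu, ← hcuv]
    simp
  -- vector orthogonal to u and v'
  obtain ⟨e, dee, due, dv'e⟩ : ∃ e : Fin n → ℝ,
      (∑ i, e i * e i) = 1 ∧ (∑ i, u i * e i) = 0 ∧ (∑ i, v' i * e i) = 0 := by
    have hker : ∃ z : Fin n → ℝ, z ≠ 0 ∧ (∑ i, u i * z i) = 0 ∧ (∑ i, v' i * z i) = 0 := by
      set F : (Fin n → ℝ) →ₗ[ℝ] ℝ × ℝ :=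
        { toFun := fun x => (∑ i, u i * x i, ∑ i, v' i * x i)
          map_add' := by
            intro x y
            simp only [Pi.add_apply, mul_add, Finset.sum_add_distrib, Prod.mk_add_mk]
          map_smul' := by
            intro r x
            simp only [Pi.smul_apply, smul_eq_mul, RingHom.id_apply, Prod.smul_mk,
              Prod.mk.injEq]
            constructor <;>
              (rw [Finset.mul_sum]; exact Finset.sum_congr rfl fun i _ => by ring) } with hF
      by_contra hcon
      push_neg at hcon
      have hbot : LinearMap.ker F = ⊥ := by
        rw [eq_bot_iff]
        intro z hz
        have hz' : F z = 0 := LinearMap.mem_ker.mp hz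
        have h1 : (∑ i, u i * z i) = 0 := congrArg Prod.fst hz'
        have h2 : (∑ i, v' i * z i) = 0 := congrArg Prod.snd hz'
        rw [Submodule.mem_bot]
        by_contra hz0
        exact hcon z hz0 h1 h2
      have hrk := LinearMap.finrank_range_add_finrank_ker F
      rw [hbot, finrank_bot, add_zero] at hrk
      have hle : Module.finrank ℝ (LinearMap.range F) ≤ Module.finrank ℝ (ℝ × ℝ) :=
        Submodule.finrank_le _
      rw [hrk] at hle
      simp [Module.finrank_pi] at hle
      omega
    obtain ⟨z, hz0, hz1, hz2⟩ := hker
    obtain ⟨i0, hi0⟩ := Function.ne_iff.mp hz0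
    have hzz : 0 < ∑ i, z i ^ 2 := by
      apply Finset.sum_pos' (fun i _ => sq_nonneg _)
      refine ⟨i0, Finset.mem_univ i0, ?_⟩
      rw [sq]
      exact mul_self_pos.mpr hi0
    set nz := Real.sqrt (∑ i, z i ^ 2) with hnz
    have hnzpos : 0 < nz := Real.sqrt_pos.mpr hzz
    have hnzsq : nz ^ 2 = ∑ i, z i ^ 2 := Real.sq_sqrt hzz.le
    refine ⟨fun i => z i / nz, ?_, ?_, ?_⟩
    · have h1 : ∀ i, z i / nz * (z i / nz) = z i ^ 2 / nz ^ 2 := fun i => by ring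
      rw [Finset.sum_congr rfl fun i _ => h1 i, ← Finset.sum_div, hnzsq]
      exact div_self hzz.ne'
    · have h1 : ∀ i, u i * (z i / nz) = u i * z i / nz := fun i => by ring
      rw [Finset.sum_congr rfl fun i _ => h1 i, ← Finset.sum_div, hz1, zero_div]
    · have h1 : ∀ i, v' i * (z i / nz) = v' i * z i / nz := fun i => by ring
      rw [Finset.sum_congr rfl fun i _ => h1 i, ← Finset.sum_div, hz2, zero_div]
  have duu : ∑ i, u i * u i = 1 := by
    rw [← hu]; exact Finset.sum_congr rfl fun i _ => by rw [sq]
  have hcomm : ∀ x y : Fin n → ℝ, ∑ i, x i * y i = ∑ i, y i * x i :=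
    fun x y => Finset.sum_congr rfl fun i _ => mul_comm _ _
  -- symmetry of the quadratic form
  have hsymm : ∀ x y : Fin n → ℝ, x ⬝ᵥ (R *ᵥ y) = y ⬝ᵥ (R *ᵥ x) := by
    intro x y
    calc x ⬝ᵥ (R *ᵥ y) = (x ᵥ* R) ⬝ᵥ y := Matrix.dotProduct_mulVec x R y
      _ = (Rᵀ *ᵥ x) ⬝ᵥ y := by rw [Matrix.mulVec_transpose]
      _ = (R *ᵥ x) ⬝ᵥ y := by rw [hRT]
      _ = y ⬝ᵥ (R *ᵥ x) := dotProduct_comm _ _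
  -- the 3×n matrix of the orthonormal triple
  set b3 : Fin 3 → (Fin n → ℝ) := ![u, v', e] with hb3
  set P : Matrix (Fin 3) (Fin n) ℝ := Matrix.of (fun k i => b3 k i) with hP
  have hPapp : ∀ k i, P k i = b3 k i := fun k i => rfl
  have hPPT : P * Pᴴ = 1 := by
    ext k l
    simp only [Matrix.mul_apply, Matrix.conjTranspose_apply, star_trivial, Matrix.one_apply]
    rw [Finset.sum_congr rfl fun i (_ : i ∈ Finset.univ) => by rw [hPapp, hPapp]]
    fin_cases k <;> fin_cases l <;>
      simp only [hb3, Matrix.cons_val_zero, Matrix.cons_val_one, Matrix.head_cons,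
        Matrix.cons_val_two, Matrix.tail_cons] <;>
      simp only [Fin.mk_one, Fin.mk_zero, ne_eq, Fin.ext_iff, Fin.val_zero, Fin.val_one,
        Fin.val_two, if_true, if_false, reduceIte] <;>
      first
        | exact duu
        | exact dv'v'
        | exact dee
        | exact duv'
        | exact due
        | exact dv'e
        | (rw [hcomm]; first | exact duv' | exact due | exact dv'e)
  -- the 3×3 compressed matrix and its spectral decomposition
  set R3 : Matrix (Fin 3) (Fin 3) ℝ := Matrix.of (fun k l : Fin 3 => b3 k ⬝ᵥ (R *ᵥ b3 l))
    with hR3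
  have hR3H : R3.IsHermitian := by
    apply Matrix.ext
    intro k l
    simp only [Matrix.conjTranspose_apply, star_trivial, hR3, Matrix.of_apply]
    exact hsymm _ _
  set μ := hR3H.eigenvalues with hμ
  set U : Matrix (Fin 3) (Fin 3) ℝ := (hR3H.eigenvectorUnitary : Matrix (Fin 3) (Fin 3) ℝ)
    with hU
  have hUmem := hR3H.eigenvectorUnitary.2
  rw [Unitary.mem_iff] at hUmem
  obtain ⟨hsUU, hUUs⟩ := hUmem
  have hdiagμ : star U * R3 * U = Matrix.diagonal μ := by
    have h := hR3H.conjStarAlgAut_star_eigenvectorUnitary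
    rw [Unitary.conjStarAlgAut_star_apply] at h
    rw [show (RCLike.ofReal ∘ hR3H.eigenvalues : Fin 3 → ℝ) = μ from rfl] at h
    exact h
  -- P * R * Pᴴ = R3
  have hPRP : P * R * Pᴴ = R3 := by
    ext k l
    simp only [hR3, Matrix.of_apply, Matrix.mul_apply, Matrix.conjTranspose_apply, star_trivial,
      dotProduct, Matrix.mulVec]
    calc ∑ j, (∑ i, P k i * R i j) * P l j
        = ∑ j, ∑ i, P k i * R i j * P l j := by
          exact Finset.sum_congr rfl fun j _ => by rw [Finset.sum_mul]
      _ = ∑ i, ∑ j, P k i * R i j * P l j := Finset.sum_comm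
      _ = ∑ i, b3 k i * ∑ j, R i j * b3 l j := by
          refine Finset.sum_congr rfl fun i _ => ?_
          rw [Finset.mul_sum]
          exact Finset.sum_congr rfl fun j _ => by rw [hPapp, hPapp]; ring
  -- the orthonormal eigen-triple, as rows of W
  set W : Matrix (Fin 3) (Fin n) ℝ := Uᴴ * P with hW
  have hWH : Wᴴ = Pᴴ * U := by
    rw [hW, Matrix.conjTranspose_mul, Matrix.conjTranspose_conjTranspose]
  have hstarU : star U = Uᴴ := Matrix.star_eq_conjTranspose U
  have hWWT : W * Wᴴ = 1 := by
    rw [hW, hWH, Matrix.mul_assoc, ← Matrix.mul_assoc P, hPPT, Matrix.one_mul, ← hstarU, hsUU]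
  have hWRW : W * R * Wᴴ = Matrix.diagonal μ := by
    rw [hW, hWH]
    have hassoc : Uᴴ * P * R * (Pᴴ * U) = Uᴴ * (P * R * Pᴴ) * U := by
      simp only [Matrix.mul_assoc]
    rw [hassoc, hPRP, ← hstarU, hdiagμ]
  have hUW : U * W = P := by
    rw [hW, ← Matrix.mul_assoc, ← hstarU, hUUs, Matrix.one_mul]
  have hWT : Wᵀ = Wᴴ := by
    ext i j
    simp [Matrix.conjTranspose_apply, Matrix.transpose_apply]
  -- key identities for vectors expressed in W coordinates
  have key1 : ∀ cv : Fin 3 → ℝ, ∑ i, (cv ᵥ* W) i ^ 2 = ∑ k, cv k ^ 2 := by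
    intro cv
    have h1 : ∑ i, (cv ᵥ* W) i ^ 2 = (cv ᵥ* W) ⬝ᵥ (cv ᵥ* W) := (hdot _).symm
    have h2 : cv ᵥ* W = Wᵀ *ᵥ cv := (Matrix.mulVec_transpose W cv).symm
    rw [h1]
    nth_rewrite 2 [h2]
    rw [Matrix.dotProduct_mulVec, Matrix.vecMul_vecMul, hWT, hWWT, Matrix.vecMul_one]
    simp [dotProduct, sq]
  have key2 : ∀ cv : Fin 3 → ℝ, (cv ᵥ* W) ⬝ᵥ (R *ᵥ (cv ᵥ* W)) = ∑ k, μ k * cv k ^ 2 := by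
    intro cv
    have h2 : cv ᵥ* W = Wᵀ *ᵥ cv := (Matrix.mulVec_transpose W cv).symm
    nth_rewrite 2 [h2]
    rw [Matrix.mulVec_mulVec, Matrix.dotProduct_mulVec, Matrix.vecMul_vecMul,
      ← Matrix.mul_assoc, hWT, hWRW]
    simp only [dotProduct, Matrix.vecMul_diagonal]
    exact Finset.sum_congr rfl fun k _ => by ring
  -- coordinates of u and v
  set α : Fin 3 → ℝ := fun k => U 0 k with hα
  have hαW : α ᵥ* W = u := by
    funext i
    have h1 : (α ᵥ* W) i = (U * W) 0 i := by
      simp [Matrix.vecMul, Matrix.mul_apply, dotProduct, hα]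
    rw [h1, hUW]
    exact hPapp 0 i
  set vc : Fin 3 → ℝ := ![cuv, sv, 0] with hvc
  have hvcP : vc ᵥ* P = v := by
    funext i
    simp only [Matrix.vecMul, dotProduct, Fin.sum_univ_three, hvc,
      Matrix.cons_val_zero, Matrix.cons_val_one, Matrix.head_cons, Matrix.cons_val_two,
      Matrix.tail_cons]
    rw [hPapp, hPapp, hPapp]
    show cuv * u i + sv * v' i + 0 * e i = v i
    rw [hv']
    field_simp
    ring
  set β : Fin 3 → ℝ := vc ᵥ* U with hβ
  have hβW : β ᵥ* W = v := by
    rw [hβ, Matrix.vecMul_vecMul, hUW, hvcP]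
  -- apply the three-dimensional core lemma
  have hα1 : ∑ k, α k ^ 2 = 1 := by rw [← key1 α, hαW]; exact hu
  have hβ1 : ∑ k, β k ^ 2 = 1 := by rw [← key1 β, hβW]; exact hv
  have hαr : ∑ k, μ k * α k ^ 2 = 0 := by rw [← key2 α, hαW]; exact hru
  have hβr : ∑ k, μ k * β k ^ 2 = 0 := by rw [← key2 β, hβW]; exact hrv
  set f3 : (Fin 3 → ℝ) → ℝ := fun cv => f (cv ᵥ* W) with hf3
  have hWcont : Continuous (fun cv : Fin 3 → ℝ => cv ᵥ* W) := by
    apply continuous_pi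
    intro i
    simp only [Matrix.vecMul, dotProduct]
    exact continuous_finset_sum _ fun k _ => (continuous_apply k).mul continuous_const
  have hf3cont : Continuous f3 := hf.comp hWcont
  have hf3e : ∀ cv, f3 (-cv) = f3 cv := by
    intro cv
    simp only [hf3, Matrix.neg_vecMul, hfe]
  have hc3 : c ∈ Set.uIcc (f3 α) (f3 β) := by
    simp only [hf3]
    rw [hαW, hβW]
    exact hc
  obtain ⟨x3, hx31, hx32, hx33⟩ := ro_core3 μ α β hα1 hβ1 hαr hβr f3 hf3cont hf3e c hc3
  refine ⟨x3 ᵥ* W, ?_, ?_, hx33⟩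
  · rw [key1]; exact hx31
  · rw [key2]; exact hx32

private lemma ro_extract {N : ℕ} (M : Matrix (Fin N) (Fin N) ℝ) (hM : M.PosSemidef)
    (hr : M.rank = 1) (ht : M.trace = 1) :
    ∃ u : Fin N → ℝ, (∑ i, u i ^ 2 = 1) ∧ M = Matrix.of (fun i j => u i * u j) := by
  have hH := hM.isHermitian
  have hcard : Fintype.card {i // hH.eigenvalues i ≠ 0} = 1 := by
    rw [← hH.rank_eq_card_non_zero_eigs]; exact hr
  obtain ⟨⟨j₀, hj₀⟩, hun⟩ := Fintype.card_eq_one_iff.mp hcard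
  have hzero : ∀ i, i ≠ j₀ → hH.eigenvalues i = 0 := by
    intro i hi
    by_contra h
    have := hun ⟨i, h⟩
    exact hi (congrArg Subtype.val this)
  have hUmem := hH.eigenvectorUnitary.2
  rw [Unitary.mem_iff] at hUmem
  obtain ⟨hsUU, hUUs⟩ := hUmem
  have htr : M.trace = ∑ i, hH.eigenvalues i := by
    conv_lhs => rw [hH.spectral_theorem, Unitary.conjStarAlgAut_apply]
    rw [Matrix.trace_mul_cycle, hsUU, Matrix.one_mul, Matrix.trace_diagonal]
    rfl
  have hj1 : hH.eigenvalues j₀ = 1 := by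
    have hs : ∑ i, hH.eigenvalues i = hH.eigenvalues j₀ :=
      Finset.sum_eq_single j₀ (fun i _ hi => hzero i hi) (fun h => absurd (Finset.mem_univ j₀) h)
    rw [← hs, ← htr, ht]
  set u : Fin N → ℝ := fun i => hH.eigenvectorBasis j₀ i with hudef
  have hent : ∀ i k, M i k = u i * u k := by
    intro i k
    conv_lhs => rw [hH.spectral_theorem, Unitary.conjStarAlgAut_apply]
    rw [Matrix.mul_apply]
    rw [Finset.sum_eq_single j₀ ?h₀ ?h₁]
    case h₀ =>
      intro l _ hl
      rw [Matrix.mul_apply]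
      rw [Finset.sum_eq_single l (fun m _ hm => by
        simp [Matrix.diagonal_apply_ne _ (show m ≠ l from hm)])
        (fun h => absurd (Finset.mem_univ l) h)]
      simp [Matrix.diagonal_apply_eq, Function.comp, hzero l hl]
    case h₁ =>
      intro h
      exact absurd (Finset.mem_univ j₀) h
    rw [Matrix.mul_apply]
    rw [Finset.sum_eq_single j₀ (fun m _ hm => by
      simp [Matrix.diagonal_apply_ne _ (show m ≠ j₀ from hm)])
      (fun h => absurd (Finset.mem_univ j₀) h)]
    simp only [Matrix.diagonal_apply_eq, Function.comp_apply, hj1, Matrix.star_apply,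
      star_trivial, Matrix.IsHermitian.eigenvectorUnitary_apply, RCLike.ofReal_one, mul_one]
    rfl
  have hM' : M = Matrix.of (fun i j => u i * u j) := by
    apply Matrix.ext
    intro i k
    rw [hent]
    rfl
  refine ⟨u, ?_, hM'⟩
  have : M.trace = ∑ i, u i ^ 2 := by
    rw [Matrix.trace]
    refine Finset.sum_congr rfl fun i _ => ?_
    rw [Matrix.diag_apply, hent, sq]
  rw [← this, ht]

private lemma ro_outer_trace_mul {N : ℕ} (C : Matrix (Fin N) (Fin N) ℝ) (x : Fin N → ℝ) :
    (C * Matrix.of (fun i j => x i * x j)).trace = x ⬝ᵥ (C *ᵥ x) := by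
  rw [Matrix.trace]
  simp only [Matrix.diag_apply, Matrix.mul_apply, Matrix.of_apply, dotProduct,
    Matrix.mulVec, dotProduct]
  refine Finset.sum_congr rfl fun i _ => ?_
  rw [Finset.mul_sum]
  refine Finset.sum_congr rfl fun j _ => by ring

private lemma ro_outer_posSemidef {N : ℕ} (x : Fin N → ℝ) :
    (Matrix.of (fun i j => x i * x j)).PosSemidef := by
  refine Matrix.PosSemidef.of_dotProduct_mulVec_nonneg ?_ ?_
  · apply Matrix.ext
    intro i j
    simp only [Matrix.conjTranspose_apply, star_trivial, Matrix.of_apply]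
    ring
  · intro y
    have h : star y ⬝ᵥ (Matrix.of (fun i j => x i * x j) *ᵥ y) = (∑ i, x i * y i) ^ 2 := by
      simp only [dotProduct, Matrix.mulVec, Matrix.of_apply, Pi.star_apply, star_trivial]
      rw [sq, Finset.sum_mul_sum]
      refine Finset.sum_congr rfl fun i _ => ?_
      rw [Finset.mul_sum]
      refine Finset.sum_congr rfl fun j _ => by ring
    rw [h]
    exact sq_nonneg _

private lemma ro_outer_mulVec_self {N : ℕ} (x : Fin N → ℝ) (hx : ∑ i, x i ^ 2 = 1) :
    Matrix.of (fun i j => x i * x j) *ᵥ x = x := by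
  funext i
  simp only [Matrix.mulVec, dotProduct, Matrix.of_apply]
  have h : ∀ j, x i * x j * x j = x i * x j ^ 2 := fun j => by ring
  rw [Finset.sum_congr rfl fun j _ => h j, ← Finset.mul_sum, hx, mul_one]

private lemma ro_outer_rank {N : ℕ} (x : Fin N → ℝ) (hx : ∑ i, x i ^ 2 = 1) :
    (Matrix.of (fun i j => x i * x j)).rank = 1 := by
  have hvv : (Matrix.of (fun i j : Fin N => x i * x j)) = Matrix.vecMulVec x x := rfl
  have hle : (Matrix.of (fun i j : Fin N => x i * x j)).rank ≤ 1 := by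
    rw [hvv, Matrix.vecMulVec_eq (Fin 1)]
    refine le_trans (Matrix.rank_mul_le_left _ _) (le_trans (Matrix.rank_le_card_width _) ?_)
    simp
  have hx0 : x ≠ 0 := by
    intro h
    rw [h] at hx
    simp at hx
  have hne : (Matrix.of (fun i j : Fin N => x i * x j)).rank ≠ 0 := by
    intro h0
    rw [Matrix.rank] at h0
    have hbot := Submodule.finrank_eq_zero.mp h0
    have hmem : x ∈ LinearMap.range (Matrix.of (fun i j : Fin N => x i * x j)).mulVecLin := by
      refine ⟨x, ?_⟩
      rw [Matrix.mulVecLin_apply]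
      exact ro_outer_mulVec_self x hx
    rw [hbot, Submodule.mem_bot] at hmem
    exact hx0 hmem
  omega

private lemma ro_outer_trace {N : ℕ} (x : Fin N → ℝ) (hx : ∑ i, x i ^ 2 = 1) :
    (Matrix.of (fun i j => x i * x j)).trace = 1 := by
  rw [Matrix.trace, ← hx]
  refine Finset.sum_congr rfl fun i _ => ?_
  rw [Matrix.diag_apply, sq]
  rfl

/-- rank-one interpolation lemma. -/
theorem rank_one_interpolation {N : ℕ} (hN : 3 ≤ N) (G : GraphLaplacian N)
    (χ : Matrix (Fin N) (Fin N) ℝ) (lam : Fin N → ℝ)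
    (hχ : χᵀ * χ = 1)
    (hdiag : χᵀ * G.L * χ = Matrix.diagonal lam)
    (M₁ M₂ : Matrix (Fin N) (Fin N) ℝ)
    (h₁ : M₁.PosSemidef) (h₂ : M₂.PosSemidef)
    (hr₁ : M₁.rank = 1) (hr₂ : M₂.rank = 1)
    (x₁ x₂ y₁ y₂ : ℝ)
    (ht₁ : M₁.trace = 1) (ht₂ : M₂.trace = 1)
    (hx₁ : (Matrix.diagonal lam * M₁).trace = x₁)
    (hx₂ : (Matrix.diagonal lam * M₂).trace = x₂)
    (hy₁ : (G.L * M₁).trace = y₁)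
    (hy₂ : (G.L * M₂).trace = y₂)
    (β : ℝ) (hβ : β ∈ Set.Icc (0 : ℝ) 1) :
    ∃ M : Matrix (Fin N) (Fin N) ℝ, M.PosSemidef ∧ M.rank = 1 ∧ M.trace = 1 ∧
      (Matrix.diagonal lam * M).trace = β * x₁ + (1 - β) * x₂ ∧
      (G.L * M).trace = β * y₁ + (1 - β) * y₂ := by
  obtain ⟨hβ0, hβ1⟩ := hβ
  have hLT : (G.L)ᵀ = G.L := by
    apply Matrix.ext
    intro i j
    simp only [Matrix.transpose_apply, GraphLaplacian.L]
    by_cases h : i = j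
    · subst h; rfl
    · rw [if_neg (Ne.symm h), if_neg h, G.symm]
  have hDT : (Matrix.diagonal lam)ᵀ = Matrix.diagonal lam := Matrix.diagonal_transpose lam
  obtain ⟨u, hu, hMu⟩ := ro_extract M₁ h₁ hr₁ ht₁
  obtain ⟨v, hv, hMv⟩ := ro_extract M₂ h₂ hr₂ ht₂
  have hx₁' : u ⬝ᵥ (Matrix.diagonal lam *ᵥ u) = x₁ := by
    rw [← hx₁, hMu, ro_outer_trace_mul]
  have hx₂' : v ⬝ᵥ (Matrix.diagonal lam *ᵥ v) = x₂ := by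
    rw [← hx₂, hMv, ro_outer_trace_mul]
  have hy₁' : u ⬝ᵥ (G.L *ᵥ u) = y₁ := by
    rw [← hy₁, hMu, ro_outer_trace_mul]
  have hy₂' : v ⬝ᵥ (G.L *ᵥ v) = y₂ := by
    rw [← hy₂, hMv, ro_outer_trace_mul]
  by_cases hsame : x₁ = x₂ ∧ y₁ = y₂
  · refine ⟨M₁, h₁, hr₁, ht₁, ?_, ?_⟩
    · rw [hx₁]; linear_combination (1 - β) * hsame.1
    · rw [hy₁]; linear_combination (1 - β) * hsame.2
  · set d1 := x₂ - x₁ with hd1def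
    set d2 := y₂ - y₁ with hd2def
    have hk : 0 < d1 ^ 2 + d2 ^ 2 := by
      rcases not_and_or.mp hsame with h | h
      · have hd : d1 ≠ 0 := fun hh => h (by rw [hd1def] at hh; linarith)
        have h2 : 0 < d1 ^ 2 := by rw [sq]; exact mul_self_pos.mpr hd
        linarith [sq_nonneg d2]
      · have hd : d2 ≠ 0 := fun hh => h (by rw [hd2def] at hh; linarith)
        have h2 : 0 < d2 ^ 2 := by rw [sq]; exact mul_self_pos.mpr hd
        linarith [sq_nonneg d1]
    set c0 := -d2 * x₁ + d1 * y₁ with hc0def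
    set Rm : Matrix (Fin N) (Fin N) ℝ :=
      (-d2) • Matrix.diagonal lam + d1 • G.L - c0 • (1 : Matrix (Fin N) (Fin N) ℝ) with hRm
    have hRmT : Rmᵀ = Rm := by
      rw [hRm]
      rw [Matrix.transpose_sub, Matrix.transpose_add, Matrix.transpose_smul,
        Matrix.transpose_smul, Matrix.transpose_smul, hDT, hLT, Matrix.transpose_one]
    have hQR : ∀ z : Fin N → ℝ, z ⬝ᵥ (Rm *ᵥ z)
        = -d2 * (z ⬝ᵥ (Matrix.diagonal lam *ᵥ z)) + d1 * (z ⬝ᵥ (G.L *ᵥ z))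
          - c0 * (∑ i, z i ^ 2) := by
      intro z
      have hzz : z ⬝ᵥ z = ∑ i, z i ^ 2 := by simp [dotProduct, sq]
      rw [hRm, Matrix.sub_mulVec, Matrix.add_mulVec, dotProduct_sub,
        dotProduct_add, Matrix.smul_mulVec, Matrix.smul_mulVec,
        Matrix.smul_mulVec, Matrix.one_mulVec, dotProduct_smul,
        dotProduct_smul, dotProduct_smul, hzz]
      simp only [smul_eq_mul]
    set fq : (Fin N → ℝ) → ℝ := fun z =>
      (d1 * ((z ⬝ᵥ (Matrix.diagonal lam *ᵥ z)) - x₁ * ∑ i, z i ^ 2)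
        + d2 * ((z ⬝ᵥ (G.L *ᵥ z)) - y₁ * ∑ i, z i ^ 2)) / (d1 ^ 2 + d2 ^ 2) with hfq
    have hQcont : ∀ C : Matrix (Fin N) (Fin N) ℝ,
        Continuous (fun z : Fin N → ℝ => z ⬝ᵥ (C *ᵥ z)) := by
      intro C
      simp only [dotProduct, Matrix.mulVec]
      exact continuous_finset_sum _ fun i _ => (continuous_apply i).mul
        (continuous_finset_sum _ fun j _ => continuous_const.mul (continuous_apply j))
    have hsumcont : Continuous (fun z : Fin N → ℝ => ∑ i, z i ^ 2) :=
      continuous_finset_sum _ fun i _ => (continuous_apply i).pow 2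
    have hfcont : Continuous fq := by
      rw [hfq]
      exact (((continuous_const.mul ((hQcont _).sub (continuous_const.mul hsumcont))).add
        (continuous_const.mul ((hQcont _).sub (continuous_const.mul hsumcont)))).div_const _)
    have hfeven : ∀ z, fq (-z) = fq z := by
      intro z
      have hsz : ∑ i, (-z) i ^ 2 = ∑ i, z i ^ 2 :=
        Finset.sum_congr rfl fun i _ => by simp
      simp only [hfq, Matrix.mulVec_neg, dotProduct_neg, neg_dotProduct,
        neg_neg, hsz]
    have hfu : fq u = 0 := by
      simp only [hfq]
      rw [hx₁', hy₁', hu]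
      field_simp
      ring
    have hfv : fq v = 1 := by
      simp only [hfq]
      rw [hx₂', hy₂', hv]
      rw [div_eq_one_iff_eq hk.ne']
      rw [hd1def, hd2def]
      ring
    have hru : u ⬝ᵥ (Rm *ᵥ u) = 0 := by
      rw [hQR, hx₁', hy₁', hu, hc0def]
      ring
    have hrv : v ⬝ᵥ (Rm *ᵥ v) = 0 := by
      rw [hQR, hx₂', hy₂', hv, hc0def, hd1def, hd2def]
      ring
    have hβIcc : (1 - β) ∈ Set.uIcc (fq u) (fq v) := by
      rw [hfu, hfv, Set.uIcc_of_le zero_le_one]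
      exact ⟨by linarith, by linarith⟩
    obtain ⟨x, hx1, hx2, hx3⟩ := ro_coreN hN Rm hRmT u v hu hv hru hrv fq hfcont hfeven
      (1 - β) hβIcc
    set X := x ⬝ᵥ (Matrix.diagonal lam *ᵥ x) with hX
    set Y := x ⬝ᵥ (G.L *ᵥ x) with hY
    have e1 : -d2 * (X - x₁) + d1 * (Y - y₁) = 0 := by
      have h := hQR x
      rw [hx1, hx2, ← hX, ← hY, hc0def] at h
      linear_combination -h
    have e2 : d1 * (X - x₁) + d2 * (Y - y₁) = (1 - β) * (d1 ^ 2 + d2 ^ 2) := by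
      have h := hx3
      simp only [hfq] at h
      rw [hx1, ← hX, ← hY] at h
      field_simp at h
      linear_combination h
    have hXval : X = β * x₁ + (1 - β) * x₂ := by
      have hmain : (d1 ^ 2 + d2 ^ 2) * (X - x₁ - (1 - β) * d1) = 0 := by
        linear_combination d1 * e2 - d2 * e1
      have h0 : X - x₁ - (1 - β) * d1 = 0 := by
        rcases mul_eq_zero.mp hmain with h | h
        · exact absurd h hk.ne'
        · exact h
      rw [hd1def] at h0
      linear_combination h0
    have hYval : Y = β * y₁ + (1 - β) * y₂ := by
      have hmain : (d1 ^ 2 + d2 ^ 2) * (Y - y₁ - (1 - β) * d2) = 0 := by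
        linear_combination d2 * e2 + d1 * e1
      have h0 : Y - y₁ - (1 - β) * d2 = 0 := by
        rcases mul_eq_zero.mp hmain with h | h
        · exact absurd h hk.ne'
        · exact h
      rw [hd2def] at h0
      linear_combination h0
    refine ⟨Matrix.of (fun i j => x i * x j), ro_outer_posSemidef x, ro_outer_rank x hx1,
      ro_outer_trace x hx1, ?_, ?_⟩
    · rw [ro_outer_trace_mul, ← hX]; exact hXval
    · rw [ro_outer_trace_mul, ← hY]; exact hYval
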